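/- Every cocartesian fibration over a quasicategory is an isofibration: if p : X → C is a cocartesian fibration with C a quasicategory, then for any object x ∈ X₀ and any equivalence f : p(x) → b in C, there exists an equivalence φ : x → y in X with p(φ) = f. -/

import Mathlib

open CategoryTheory Simplicial SSet Opposite

universe v u

/-- An *inner fibration* is a map of simplicial sets with the right lifting property
with respect to the inner horn inclusions `Λ[n, i] ↪ Δ[n]` for `n ≥ 2` and `0 < i < n`. -/
def IsInnerFibration {X S : SSet.{u}} (p : X ⟶ S) : Prop :=
  ∀ ⦃n : ℕ⦄ ⦃i : Fin (n + 1)⦄, 2 ≤ n → 0 < (i : ℕ) → (i : ℕ) < n →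
    HasLiftingProperty (Λ[n, i].ι) p

/-- The edge of the horn `Λ[n, 0]` from vertex `0` to vertex `1` (needs `n ≥ 2`),
i.e. the image of `Δ^{0,1} ↪ Λ[n, 0]`. -/
def hornEdge01 (n : ℕ) (hn : 2 ≤ n) : (Λ[n, 0] : SSet) _⦋1⦌ :=
  horn.edge n 0 0 1 (Fin.zero_le _) (by
    rw [show ({0, 0, 1} : Finset (Fin (n + 1))) = {0, 1} by simp]
    refine le_trans (Finset.card_insert_le _ _) (by simpa using hn))

/-- An edge `e` of `X` is *`p`-cocartesian* if for every `n ≥ 2`, every map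
`F : Λ[n, 0] ⟶ X` whose restriction to `Δ^{0,1}` is `e`, and every commutative
square over a given `n`-simplex of `S`, a lift `Δ[n] ⟶ X` exists. -/
def IsCocartesianEdge {X S : SSet.{u}} (p : X ⟶ S) (e : X _⦋1⦌) : Prop :=
  ∀ ⦃n : ℕ⦄ (hn : 2 ≤ n) (F : (Λ[n, 0] : SSet) ⟶ X) (σ : Δ[n] ⟶ S),
    F.app (op ⦋1⦌) (hornEdge01 n hn) = e →
    F ≫ p = Λ[n, 0].ι ≫ σ →
    ∃ G : Δ[n] ⟶ X, Λ[n, 0].ι ≫ G = F ∧ G ≫ p = σ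

/-- A *cocartesian fibration* is an inner fibration `p : X ⟶ S` such that for every
edge `η : s → t` of `S` and every vertex `x` of `X` over `s`, there is a
`p`-cocartesian edge `e : x → y` of `X` lying over `η`. -/
def IsCocartesianFibration {X S : SSet.{u}} (p : X ⟶ S) : Prop :=
  IsInnerFibration p ∧
    ∀ (η : S _⦋1⦌) (x : X _⦋0⦌), p.app (op ⦋0⦌) x = S.δ 1 η →
      ∃ e : X _⦋1⦌, X.δ 1 e = x ∧ p.app (op ⦋1⦌) e = η ∧ IsCocartesianEdge p e

/-- An edge `f` of a simplicial set `X` is an *equivalence* if it becomes an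
isomorphism in the homotopy category `hX`, i.e. it admits a two-sided homotopy
inverse `g`, witnessed by `2`-simplices exhibiting `g ∘ f ≃ id` and `f ∘ g ≃ id`. -/
def IsEquivEdge (X : SSet.{u}) (f : X _⦋1⦌) : Prop :=
  ∃ g : X _⦋1⦌, X.δ 1 g = X.δ 0 f ∧ X.δ 0 g = X.δ 1 f ∧
    (∃ σ : X _⦋2⦌, X.δ 0 σ = g ∧ X.δ 2 σ = f ∧ X.δ 1 σ = X.σ 0 (X.δ 1 f)) ∧
    (∃ τ : X _⦋2⦌, X.δ 0 τ = f ∧ X.δ 2 τ = g ∧ X.δ 1 τ = X.σ 0 (X.δ 0 f))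

section Auxiliary

open SimplexCategory

namespace SSetAux

variable {X : SSet.{u}}

/-- The underlying morphism of a simplex of a horn. -/
def hornHom {n : ℕ} {i : Fin (n+3)} {m : SimplexCategoryᵒᵖ} (f : (Λ[n+2, i] : SSet.{u}).obj m) :
    (⦋m.unop.len⦌ : SimplexCategory) ⟶ ⦋n+2⦌ :=
  stdSimplex.objEquiv f.1

lemma horn_exists_missed {n : ℕ} {i : Fin (n+3)} {m : SimplexCategoryᵒᵖ}
    (f : (Λ[n+2, i] : SSet.{u}).obj m) : ∃ j, ¬j = i ∧ ∀ k, (hornHom f).toOrderHom k ≠ j := by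
  obtain ⟨f, hf'⟩ := f
  obtain ⟨f', hf⟩ := stdSimplex.objEquiv.symm.surjective f
  subst hf
  have : hornHom (⟨stdSimplex.objEquiv.symm f', hf'⟩ : (Λ[n+2, i] : SSet.{u}).obj m) = f' := by
    simp [hornHom]
  rw [this]
  rw [mem_horn_iff] at hf'
  by_contra! H
  apply hf'
  ext k
  simp only [Set.mem_union, Set.mem_range, Set.mem_singleton_iff, Set.mem_univ, iff_true]
  by_cases hk : k = i
  · exact Or.inr hk
  · obtain ⟨l, hl⟩ := H k hk
    exact Or.inl ⟨l, hl⟩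

/-- Value of the would-be horn morphism at a simplex `f`, using a chosen missed index `j`. -/
noncomputable def hornVal {n : ℕ} {i : Fin (n+3)} (T : ∀ j : Fin (n+3), j ≠ i → X _⦋n+1⦌)
    {m : SimplexCategoryᵒᵖ} (f : (Λ[n+2, i] : SSet.{u}).obj m) (j : Fin (n+3)) (hj : j ≠ i) : X.obj m :=
  X.map (factor_δ (hornHom f) j).op (T j hj)

lemma hornVal_eq_aux {n : ℕ} {i : Fin (n+3)} (T : ∀ j : Fin (n+3), j ≠ i → X _⦋n+1⦌)
    (compat : ∀ (a b : Fin (n+2)), a ≤ b → ∀ (ha : a.castSucc ≠ i) (hb : b.succ ≠ i),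
      X.δ a (T b.succ hb) = X.δ b (T a.castSucc ha))
    {m : SimplexCategoryᵒᵖ} (f : (Λ[n+2, i] : SSet.{u}).obj m) (j k : Fin (n+3)) (hj : j ≠ i) (hk : k ≠ i)
    (hjm : ∀ l, (hornHom f).toOrderHom l ≠ j) (hkm : ∀ l, (hornHom f).toOrderHom l ≠ k)
    (hlt : j < k) :
    hornVal T f j hj = hornVal T f k hk := by
  have hk0 : k ≠ 0 := Fin.pos_iff_ne_zero.mp (lt_of_le_of_lt (Fin.zero_le _) hlt)
  have hjl : j ≠ Fin.last _ := Fin.ne_last_of_lt hlt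
  obtain ⟨k₀, rfl⟩ : ∃ k₀ : Fin (n+2), k = k₀.succ := ⟨k.pred hk0, (Fin.succ_pred _ _).symm⟩
  obtain ⟨j₀, rfl⟩ : ∃ j₀ : Fin (n+2), j = j₀.castSucc :=
    ⟨j.castPred hjl, (Fin.castSucc_castPred _ _).symm⟩
  have hj₀k₀ : j₀ ≤ k₀ := by
    rw [← Fin.castSucc_le_castSucc_iff]
    exact Fin.le_castSucc_iff.mpr (by simpa using hlt)
  have hgj : factor_δ (hornHom f) j₀.castSucc ≫ δ j₀.castSucc = hornHom f := factor_δ_spec _ _ hjm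
  have hgk : factor_δ (hornHom f) k₀.succ ≫ δ k₀.succ = hornHom f := factor_δ_spec _ _ hkm
  have hgjm : ∀ l, (factor_δ (hornHom f) j₀.castSucc).toOrderHom l ≠ k₀ := by
    intro l hl
    apply hkm l
    have h1 : (hornHom f).toOrderHom l
        = (δ j₀.castSucc).toOrderHom ((factor_δ (hornHom f) j₀.castSucc).toOrderHom l) := by
      conv_lhs => rw [← hgj]
      rfl
    rw [h1, hl]
    show (j₀.castSucc).succAbove k₀ = k₀.succ
    rw [Fin.succAbove_of_le_castSucc _ _ (Fin.castSucc_le_castSucc_iff.mpr hj₀k₀)]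
  have hgkm : ∀ l, (factor_δ (hornHom f) k₀.succ).toOrderHom l ≠ j₀ := by
    intro l hl
    apply hjm l
    have h1 : (hornHom f).toOrderHom l
        = (δ k₀.succ).toOrderHom ((factor_δ (hornHom f) k₀.succ).toOrderHom l) := by
      conv_lhs => rw [← hgk]
      rfl
    rw [h1, hl]
    show (k₀.succ).succAbove j₀ = j₀.castSucc
    rw [Fin.succAbove_of_castSucc_lt _ _ hlt]
  have hhj : factor_δ (factor_δ (hornHom f) j₀.castSucc) k₀ ≫ δ k₀
      = factor_δ (hornHom f) j₀.castSucc := factor_δ_spec _ _ hgjm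
  have hhk : factor_δ (factor_δ (hornHom f) k₀.succ) j₀ ≫ δ j₀
      = factor_δ (hornHom f) k₀.succ := factor_δ_spec _ _ hgkm
  have hδδ : (δ j₀ ≫ δ k₀.succ : (⦋n⦌ : SimplexCategory) ⟶ ⦋n+2⦌) = δ k₀ ≫ δ j₀.castSucc :=
    SimplexCategory.δ_comp_δ hj₀k₀
  have heq : factor_δ (factor_δ (hornHom f) j₀.castSucc) k₀
      = factor_δ (factor_δ (hornHom f) k₀.succ) j₀ := by
    have h1 : factor_δ (factor_δ (hornHom f) j₀.castSucc) k₀ ≫ (δ j₀ ≫ δ k₀.succ)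
        = hornHom f := by rw [hδδ, ← Category.assoc, hhj, hgj]
    have h2 : factor_δ (factor_δ (hornHom f) k₀.succ) j₀ ≫ (δ j₀ ≫ δ k₀.succ)
        = hornHom f := by rw [← Category.assoc, hhk, hgk]
    have h3 := h1.trans h2.symm
    rw [← Category.assoc, ← Category.assoc] at h3
    exact (cancel_mono (δ j₀)).mp ((cancel_mono (δ k₀.succ)).mp h3)
  have hcomp := compat j₀ k₀ hj₀k₀ hj hk
  unfold hornVal
  conv_lhs => rw [← hhj]
  conv_rhs => rw [← hhk]
  rw [op_comp, op_comp, X.map_comp, X.map_comp]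
  show X.map _ (X.map (δ k₀).op (T _ hj)) = X.map _ (X.map (δ j₀).op (T _ hk))
  rw [heq]
  exact congrArg (X.map (factor_δ (factor_δ (hornHom f) k₀.succ) j₀).op) hcomp.symm


section
variable {n : ℕ} {i : Fin (n+3)} (T : ∀ j : Fin (n+3), j ≠ i → X _⦋n+1⦌)
  (compat : ∀ (a b : Fin (n+2)), a ≤ b → ∀ (ha : a.castSucc ≠ i) (hb : b.succ ≠ i),
      X.δ a (T b.succ hb) = X.δ b (T a.castSucc ha))

lemma hornHom_face (j : Fin (n+3)) (hj : j ≠ i) :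
    hornHom (horn.face i j hj) = (δ j : (⦋n+1⦌ : SimplexCategory) ⟶ ⦋n+2⦌) := by
  rfl

include compat

lemma hornVal_eq {m : SimplexCategoryᵒᵖ} (f : (Λ[n+2, i] : SSet.{u}).obj m) (j k : Fin (n+3))
    (hj : j ≠ i) (hk : k ≠ i)
    (hjm : ∀ l, (hornHom f).toOrderHom l ≠ j) (hkm : ∀ l, (hornHom f).toOrderHom l ≠ k) :
    hornVal T f j hj = hornVal T f k hk := by
  rcases lt_trichotomy j k with h | h | h
  · exact hornVal_eq_aux T compat f j k hj hk hjm hkm h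
  · subst h; rfl
  · exact (hornVal_eq_aux T compat f k j hk hj hkm hjm h).symm

/-- Build a morphism from a horn out of compatible faces. -/
noncomputable def hornMk : (Λ[n+2, i] : SSet.{u}) ⟶ X where
  app m := TypeCat.ofHom fun f => hornVal T f (horn_exists_missed f).choose (horn_exists_missed f).choose_spec.1
  naturality m m' g := by
    refine ConcreteCategory.hom_ext _ _ fun f => ?_
    set f' := (Λ[n+2, i] : SSet.{u}).map g f with hf'
    have hhom : hornHom f' = g.unop ≫ hornHom f := by
      simp [hornHom, hf', stdSimplex.map_apply]
      rfl
    obtain ⟨j, hj, hjm⟩ := horn_exists_missed f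
    have hjm' : ∀ l, (hornHom f').toOrderHom l ≠ j := by
      intro l
      rw [hhom]
      exact hjm _
    show hornVal T f' _ _ = X.map g (hornVal T f _ _)
    rw [hornVal_eq T compat f' (horn_exists_missed f').choose j
        (horn_exists_missed f').choose_spec.1 hj
        (horn_exists_missed f').choose_spec.2 hjm',
      hornVal_eq T compat f (horn_exists_missed f).choose j
        (horn_exists_missed f).choose_spec.1 hj
        (horn_exists_missed f).choose_spec.2 hjm]
    unfold hornVal
    have hfac : factor_δ (hornHom f') j = g.unop ≫ factor_δ (hornHom f) j := by
      have h1 : factor_δ (hornHom f') j ≫ δ j = hornHom f' := factor_δ_spec _ _ hjm'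
      have h2 : (g.unop ≫ factor_δ (hornHom f) j) ≫ δ j = hornHom f' := by
        rw [Category.assoc, factor_δ_spec _ _ hjm, hhom]
      exact (cancel_mono (δ j)).mp (h1.trans h2.symm)
    rw [hfac]
    have : (g.unop ≫ factor_δ (hornHom f) j).op = (factor_δ (hornHom f) j).op ≫ g := rfl
    rw [this, X.map_comp]
    rfl

lemma hornMk_app {m : SimplexCategoryᵒᵖ} (f : (Λ[n+2, i] : SSet.{u}).obj m) (j : Fin (n+3)) (hj : j ≠ i)
    (hjm : ∀ l, (hornHom f).toOrderHom l ≠ j) :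
    (hornMk T compat).app m f = X.map (factor_δ (hornHom f) j).op (T j hj) :=
  hornVal_eq T compat f _ j (horn_exists_missed f).choose_spec.1 hj
    (horn_exists_missed f).choose_spec.2 hjm

lemma hornMk_face (j : Fin (n+3)) (hj : j ≠ i) :
    (hornMk T compat).app (op ⦋n+1⦌) (horn.face i j hj) = T j hj := by
  have hjm : ∀ l, (hornHom (horn.face.{u} i j hj)).toOrderHom l ≠ j := by
    rw [hornHom_face]
    intro l
    exact Fin.succAbove_ne j l
  rw [hornMk_app T compat _ j hj hjm]
  have : factor_δ (hornHom (horn.face i j hj)) j = 𝟙 _ := by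
    have h1 := factor_δ_spec (hornHom (horn.face.{u} i j hj)) j hjm
    rw [hornHom_face] at h1 ⊢
    have h2 : (𝟙 (⦋n+1⦌ : SimplexCategory)) ≫ δ j = δ j := Category.id_comp _
    exact (cancel_mono (δ j)).mp (h1.trans h2.symm)
  rw [this]
  show X.map (𝟙 _) (T j hj) = T j hj
  rw [X.map_id]
  rfl

end


section Fill

variable {X C : SSet.{u}} {p : X ⟶ C}

lemma napp_δ {k : ℕ} (a : Fin (k+2)) (z : X _⦋k+1⦌) :
    p.app (op ⦋k⦌) (X.δ a z) = C.δ a (p.app (op ⦋k+1⦌) z) :=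
  NatTrans.naturality_apply p (SimplexCategory.δ a).op z

lemma napp_σ {k : ℕ} (a : Fin (k+1)) (z : X _⦋k⦌) :
    p.app (op ⦋k+1⦌) (X.σ a z) = C.σ a (p.app (op ⦋k⦌) z) :=
  NatTrans.naturality_apply p (SimplexCategory.σ a).op z

lemma yEq_face {n : ℕ} {i : Fin (n+3)} (G : Δ[n+2] ⟶ X) (j : Fin (n+3)) (hj : j ≠ i) :
    X.δ j (SSet.yonedaEquiv (X := X) (n := ⦋n+2⦌) G) =
      (Λ[n+2, i].ι ≫ G).app (op ⦋n+1⦌) (horn.face i j hj) := by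
  rw [← horn.yonedaEquiv_ι, ← SSet.yonedaEquiv_comp, horn.ι_ι_assoc]
  exact SSet.yonedaEquiv_naturality _ _

lemma yEq_comp {k : ℕ} (G : Δ[k] ⟶ X) :
    p.app (op ⦋k⦌) (SSet.yonedaEquiv (X := X) (n := ⦋k⦌) G) = SSet.yonedaEquiv (X := C) (n := ⦋k⦌) (G ≫ p) := rfl

lemma hornMk_comp_eq {n : ℕ} {i : Fin (n+3)}
    (T : ∀ j : Fin (n+3), j ≠ i → X _⦋n+1⦌)
    (compat : ∀ (a b : Fin (n+2)), a ≤ b → ∀ (ha : a.castSucc ≠ i) (hb : b.succ ≠ i),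
      X.δ a (T b.succ hb) = X.δ b (T a.castSucc ha))
    (S : C _⦋n+2⦌) (hS : ∀ j hj, p.app (op ⦋n+1⦌) (T j hj) = C.δ j S) :
    hornMk T compat ≫ p = Λ[n+2, i].ι ≫ (SSet.yonedaEquiv (X := C) (n := ⦋n+2⦌)).symm S := by
  apply horn.hom_ext
  intro j hj
  show p.app _ ((hornMk T compat).app _ (horn.face i j hj)) = _
  rw [hornMk_face T compat j hj, hS j hj]
  show C.δ j S = C.map (stdSimplex.objEquiv ((horn.face.{u} i j hj).1)).op S
  have h3 : stdSimplex.objEquiv ((horn.face.{u} i j hj).1)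
      = (SimplexCategory.δ j : (⦋n+1⦌ : SimplexCategory) ⟶ ⦋n+2⦌) := by
    rfl
  rw [h3]
  rfl

/-- Fill an inner horn over a prescribed base simplex, using an inner fibration. -/
lemma fill_inner_over (hp : IsInnerFibration p) {n : ℕ} {i : Fin (n+3)}
    (h0 : 0 < (i : ℕ)) (hn : (i : ℕ) < n+2)
    (T : ∀ j : Fin (n+3), j ≠ i → X _⦋n+1⦌)
    (compat : ∀ (a b : Fin (n+2)), a ≤ b → ∀ (ha : a.castSucc ≠ i) (hb : b.succ ≠ i),
      X.δ a (T b.succ hb) = X.δ b (T a.castSucc ha))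
    (S : C _⦋n+2⦌) (hS : ∀ j hj, p.app (op ⦋n+1⦌) (T j hj) = C.δ j S) :
    ∃ w : X _⦋n+2⦌, (∀ j hj, X.δ j w = T j hj) ∧ p.app (op ⦋n+2⦌) w = S := by
  have hlp : HasLiftingProperty (Λ[n+2, i].ι) p := hp (by omega) h0 hn
  have sq : CommSq (hornMk T compat) (Λ[n+2, i].ι) p
      ((SSet.yonedaEquiv (X := C) (n := ⦋n+2⦌)).symm S) := ⟨hornMk_comp_eq T compat S hS⟩
  haveI := hlp
  refine ⟨SSet.yonedaEquiv (X := X) (n := ⦋n+2⦌) sq.lift, fun j hj => ?_, ?_⟩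
  · rw [yEq_face sq.lift j hj, sq.fac_left]
    exact hornMk_face T compat j hj
  · rw [yEq_comp, sq.fac_right, Equiv.apply_symm_apply]


lemma fillC [Quasicategory C] {n : ℕ} {i : Fin (n+3)} (h0 : 0 < i) (hn : i < Fin.last (n+2))
    (T : ∀ j : Fin (n+3), j ≠ i → C _⦋n+1⦌)
    (compat : ∀ (a b : Fin (n+2)), a ≤ b → ∀ (ha : a.castSucc ≠ i) (hb : b.succ ≠ i),
      C.δ a (T b.succ hb) = C.δ b (T a.castSucc ha)) :
    ∃ S : C _⦋n+2⦌, ∀ j hj, C.δ j S = T j hj := by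
  obtain ⟨σ, hσ⟩ := Quasicategory.hornFilling' (hornMk T compat) h0 hn
  refine ⟨SSet.yonedaEquiv (X := C) (n := ⦋n+2⦌) σ, fun j hj => ?_⟩
  rw [yEq_face σ j hj (i := i), ← hσ]
  exact hornMk_face T compat j hj

lemma fill_inner [Quasicategory C] (hp : IsInnerFibration p) {n : ℕ} {i : Fin (n+3)}
    (h0 : 0 < i) (hn : i < Fin.last (n+2))
    (T : ∀ j : Fin (n+3), j ≠ i → X _⦋n+1⦌)
    (compat : ∀ (a b : Fin (n+2)), a ≤ b → ∀ (ha : a.castSucc ≠ i) (hb : b.succ ≠ i),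
      X.δ a (T b.succ hb) = X.δ b (T a.castSucc ha)) :
    ∃ w : X _⦋n+2⦌, ∀ j hj, X.δ j w = T j hj := by
  obtain ⟨S, hS⟩ := fillC h0 hn (fun j hj => p.app (op ⦋n+1⦌) (T j hj))
    (fun a b hab ha hb => by rw [← napp_δ, ← napp_δ, compat a b hab ha hb])
  have h0' : 0 < (i : ℕ) := h0
  have hn' : (i : ℕ) < n+2 := hn
  obtain ⟨w, hw, -⟩ := fill_inner_over hp h0' hn' T compat S (fun j hj => (hS j hj).symm)
  exact ⟨w, hw⟩

lemma fill_cocart {φ : X _⦋1⦌} (hφ : IsCocartesianEdge p φ) {n : ℕ}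
    (T : ∀ j : Fin (n+3), j ≠ 0 → X _⦋n+1⦌)
    (compat : ∀ (a b : Fin (n+2)), a ≤ b → ∀ (ha : a.castSucc ≠ 0) (hb : b.succ ≠ 0),
      X.δ a (T b.succ hb) = X.δ b (T a.castSucc ha))
    (S : C _⦋n+2⦌) (hS : ∀ j hj, p.app (op ⦋n+1⦌) (T j hj) = C.δ j S)
    (hedge : (hornMk T compat).app (op ⦋1⦌) (hornEdge01 (n+2) (by omega)) = φ) :
    ∃ w : X _⦋n+2⦌, (∀ j hj, X.δ j w = T j hj) ∧ p.app (op ⦋n+2⦌) w = S := by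
  obtain ⟨G, hG1, hG2⟩ := hφ (by omega) (hornMk T compat)
    ((SSet.yonedaEquiv (X := C) (n := ⦋n+2⦌)).symm S) hedge (hornMk_comp_eq T compat S hS)
  refine ⟨SSet.yonedaEquiv (X := X) (n := ⦋n+2⦌) G, fun j hj => ?_, ?_⟩
  · rw [yEq_face G j hj, hG1]
    exact hornMk_face T compat j hj
  · rw [yEq_comp, hG2, Equiv.apply_symm_apply]

lemma hornHom_edge01_two (h : 2 ≤ 2) :
    hornHom (hornEdge01.{u} 2 h) = (SimplexCategory.δ 2 : (⦋1⦌ : SimplexCategory) ⟶ ⦋2⦌) := by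
  apply SimplexCategory.Hom.ext'
  apply OrderHom.ext
  funext l
  fin_cases l <;> rfl

lemma hornHom_edge01_three (h : 2 ≤ 3) :
    hornHom (hornEdge01.{u} 3 h)
      = (SimplexCategory.δ 2 : (⦋1⦌ : SimplexCategory) ⟶ ⦋2⦌) ≫ SimplexCategory.δ 2 := by
  apply SimplexCategory.Hom.ext'
  apply OrderHom.ext
  funext l
  fin_cases l <;> rfl


lemma hornMk_edge01_two (T : ∀ j : Fin 3, j ≠ 0 → X _⦋1⦌)
    (compat : ∀ (a b : Fin 2), a ≤ b → ∀ (ha : a.castSucc ≠ 0) (hb : b.succ ≠ 0),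
      X.δ a (T b.succ hb) = X.δ b (T a.castSucc ha)) (h : 2 ≤ 2) :
    (hornMk T compat).app (op ⦋1⦌) (hornEdge01 2 h) = T 2 (by decide) := by
  have hmiss : ∀ l, (hornHom (hornEdge01.{u} 2 h)).toOrderHom l ≠ 2 := by
    rw [hornHom_edge01_two]
    intro l
    exact Fin.succAbove_ne _ l
  rw [hornMk_app T compat _ 2 (by decide) hmiss]
  have hfac : factor_δ (hornHom (hornEdge01.{u} 2 h)) 2 = 𝟙 _ := by
    have h1 := factor_δ_spec (hornHom (hornEdge01.{u} 2 h)) 2 hmiss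
    refine (cancel_mono (SimplexCategory.δ (2 : Fin 3))).mp ?_
    rw [Category.id_comp, h1]
    exact hornHom_edge01_two h
  rw [hfac]
  show X.map (𝟙 _) _ = _
  rw [X.map_id]
  rfl

lemma hornMk_edge01_three (T : ∀ j : Fin 4, j ≠ 0 → X _⦋2⦌)
    (compat : ∀ (a b : Fin 3), a ≤ b → ∀ (ha : a.castSucc ≠ 0) (hb : b.succ ≠ 0),
      X.δ a (T b.succ hb) = X.δ b (T a.castSucc ha)) (h : 2 ≤ 3) :
    (hornMk T compat).app (op ⦋1⦌) (hornEdge01 3 h) = X.δ 2 (T 2 (by decide)) := by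
  have hmiss : ∀ l, (hornHom (hornEdge01.{u} 3 h)).toOrderHom l ≠ 2 := by
    rw [hornHom_edge01_three]
    intro l
    fin_cases l <;> decide
  rw [hornMk_app T compat _ 2 (by decide) hmiss]
  have hfac : factor_δ (hornHom (hornEdge01.{u} 3 h)) 2
      = (SimplexCategory.δ 2 : (⦋1⦌ : SimplexCategory) ⟶ ⦋2⦌) := by
    have h1 := factor_δ_spec (hornHom (hornEdge01.{u} 3 h)) 2 hmiss
    refine (cancel_mono (SimplexCategory.δ (2 : Fin 4))).mp ?_
    rw [h1]
    exact hornHom_edge01_three h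
  rw [hfac]
  rfl

variable {φ : X _⦋1⦌}

/-- Cocartesian `Λ[2,0]` filling. -/
lemma fill20 (hφ : IsCocartesianEdge p φ) (T1 : X _⦋1⦌) (c : X.δ 1 φ = X.δ 1 T1)
    (S : C _⦋2⦌) (h1 : p.app (op ⦋1⦌) T1 = C.δ 1 S) (h2 : p.app (op ⦋1⦌) φ = C.δ 2 S) :
    ∃ w : X _⦋2⦌, X.δ 1 w = T1 ∧ X.δ 2 w = φ ∧ p.app (op ⦋2⦌) w = S := by
  have compat : ∀ (a b : Fin 2), a ≤ b → ∀ (ha : a.castSucc ≠ (0 : Fin 3))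
      (hb : b.succ ≠ (0 : Fin 3)),
      X.δ a ((fun j (_ : j ≠ (0 : Fin 3)) => ![φ, T1, φ] j) b.succ hb)
        = X.δ b ((fun j (_ : j ≠ (0 : Fin 3)) => ![φ, T1, φ] j) a.castSucc ha) := by
    intro a b hab ha hb
    fin_cases a <;> fin_cases b <;> first
      | exact absurd rfl ha
      | exact absurd hab (by decide)
      | exact c
  obtain ⟨w, hw, hp'⟩ := fill_cocart hφ (n := 0) (fun j _ => ![φ, T1, φ] j) compat S
    (fun j hj => by fin_cases j <;> first | (exact (absurd rfl hj)) | (exact h1) | (exact h2))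
    (by rw [hornMk_edge01_two]; rfl)
  exact ⟨w, hw 1 (by decide), hw 2 (by decide), hp'⟩

/-- Inner `Λ[2,1]` filling over a prescribed base. -/
lemma fill21 (hp : IsInnerFibration p) (T0 T2 : X _⦋1⦌) (c : X.δ 0 T2 = X.δ 1 T0)
    (S : C _⦋2⦌) (h0 : p.app (op ⦋1⦌) T0 = C.δ 0 S) (h2 : p.app (op ⦋1⦌) T2 = C.δ 2 S) :
    ∃ w : X _⦋2⦌, X.δ 0 w = T0 ∧ X.δ 2 w = T2 ∧ p.app (op ⦋2⦌) w = S := by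
  have compat : ∀ (a b : Fin 2), a ≤ b → ∀ (ha : a.castSucc ≠ (1 : Fin 3))
      (hb : b.succ ≠ (1 : Fin 3)),
      X.δ a ((fun j (_ : j ≠ (1 : Fin 3)) => ![T0, T0, T2] j) b.succ hb)
        = X.δ b ((fun j (_ : j ≠ (1 : Fin 3)) => ![T0, T0, T2] j) a.castSucc ha) := by
    intro a b hab ha hb
    fin_cases a <;> fin_cases b <;> first
      | exact absurd rfl ha
      | exact absurd rfl hb
      | exact absurd hab (by decide)
      | exact c
  obtain ⟨w, hw, hp'⟩ := fill_inner_over hp (i := (1 : Fin 3)) (by decide) (by decide)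
    (fun j _ => ![T0, T0, T2] j) compat S
    (fun j hj => by fin_cases j <;> first | (exact (absurd rfl hj)) | (exact h0) | (exact h2))
  exact ⟨w, hw 0 (by decide), hw 2 (by decide), hp'⟩


/-- Cocartesian `Λ[3,0]` filling. -/
lemma fill30 (hφ : IsCocartesianEdge p φ) (T1 T2 T3 : X _⦋2⦌)
    (c11 : X.δ 1 T2 = X.δ 1 T1) (c12 : X.δ 1 T3 = X.δ 2 T1) (c22 : X.δ 2 T3 = X.δ 2 T2)
    (hedge : X.δ 2 T2 = φ)
    (S : C _⦋3⦌) (h1 : p.app (op ⦋2⦌) T1 = C.δ 1 S) (h2 : p.app (op ⦋2⦌) T2 = C.δ 2 S)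
    (h3 : p.app (op ⦋2⦌) T3 = C.δ 3 S) :
    ∃ w : X _⦋3⦌, X.δ 1 w = T1 ∧ X.δ 2 w = T2 ∧ X.δ 3 w = T3 ∧ p.app (op ⦋3⦌) w = S := by
  have compat : ∀ (a b : Fin 3), a ≤ b → ∀ (ha : a.castSucc ≠ (0 : Fin 4))
      (hb : b.succ ≠ (0 : Fin 4)),
      X.δ a ((fun j (_ : j ≠ (0 : Fin 4)) => ![T1, T1, T2, T3] j) b.succ hb)
        = X.δ b ((fun j (_ : j ≠ (0 : Fin 4)) => ![T1, T1, T2, T3] j) a.castSucc ha) := by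
    intro a b hab ha hb
    fin_cases a <;> fin_cases b <;> first
      | exact absurd rfl ha
      | exact absurd hab (by decide)
      | exact c11
      | exact c12
      | exact c22
  obtain ⟨w, hw, hp'⟩ := fill_cocart hφ (n := 1) (fun j _ => ![T1, T1, T2, T3] j) compat S
    (fun j hj => by fin_cases j <;>
      first | (exact (absurd rfl hj)) | (exact h1) | (exact h2) | (exact h3))
    (by rw [hornMk_edge01_three]; exact hedge)
  exact ⟨w, hw 1 (by decide), hw 2 (by decide), hw 3 (by decide), hp'⟩

/-- Inner `Λ[3,1]` filling (base found by quasicategory property of `C`). -/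
lemma fill31 [Quasicategory C] (hp : IsInnerFibration p) (T0 T2 T3 : X _⦋2⦌)
    (c01 : X.δ 0 T2 = X.δ 1 T0) (c02 : X.δ 0 T3 = X.δ 2 T0) (c22 : X.δ 2 T3 = X.δ 2 T2) :
    ∃ w : X _⦋3⦌, X.δ 0 w = T0 ∧ X.δ 2 w = T2 ∧ X.δ 3 w = T3 := by
  have compat : ∀ (a b : Fin 3), a ≤ b → ∀ (ha : a.castSucc ≠ (1 : Fin 4))
      (hb : b.succ ≠ (1 : Fin 4)),
      X.δ a ((fun j (_ : j ≠ (1 : Fin 4)) => ![T0, T0, T2, T3] j) b.succ hb)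
        = X.δ b ((fun j (_ : j ≠ (1 : Fin 4)) => ![T0, T0, T2, T3] j) a.castSucc ha) := by
    intro a b hab ha hb
    fin_cases a <;> fin_cases b <;> first
      | exact absurd rfl ha
      | exact absurd rfl hb
      | exact absurd hab (by decide)
      | exact c01
      | exact c02
      | exact c22
  obtain ⟨w, hw⟩ := fill_inner hp (i := (1 : Fin 4)) (by decide) (by decide)
    (fun j _ => ![T0, T0, T2, T3] j) compat
  exact ⟨w, hw 0 (by decide), hw 2 (by decide), hw 3 (by decide)⟩

/-- Inner `Λ[3,2]` filling (base found by quasicategory property of `C`). -/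
lemma fill32 [Quasicategory C] (hp : IsInnerFibration p) (T0 T1 T3 : X _⦋2⦌)
    (c00 : X.δ 0 T1 = X.δ 0 T0) (c02 : X.δ 0 T3 = X.δ 2 T0) (c12 : X.δ 1 T3 = X.δ 2 T1) :
    ∃ w : X _⦋3⦌, X.δ 0 w = T0 ∧ X.δ 1 w = T1 ∧ X.δ 3 w = T3 := by
  have compat : ∀ (a b : Fin 3), a ≤ b → ∀ (ha : a.castSucc ≠ (2 : Fin 4))
      (hb : b.succ ≠ (2 : Fin 4)),
      X.δ a ((fun j (_ : j ≠ (2 : Fin 4)) => ![T0, T1, T1, T3] j) b.succ hb)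
        = X.δ b ((fun j (_ : j ≠ (2 : Fin 4)) => ![T0, T1, T1, T3] j) a.castSucc ha) := by
    intro a b hab ha hb
    fin_cases a <;> fin_cases b <;> first
      | exact absurd rfl ha
      | exact absurd rfl hb
      | exact absurd hab (by decide)
      | exact c00
      | exact c02
      | exact c12
  obtain ⟨w, hw⟩ := fill_inner hp (i := (2 : Fin 4)) (by decide) (by decide)
    (fun j _ => ![T0, T1, T1, T3] j) compat
  exact ⟨w, hw 0 (by decide), hw 1 (by decide), hw 3 (by decide)⟩

/-- Inner `Λ[3,1]` filling in a quasicategory. -/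
lemma fillC31 {D : SSet.{u}} [Quasicategory D] (T0 T2 T3 : D _⦋2⦌)
    (c01 : D.δ 0 T2 = D.δ 1 T0) (c02 : D.δ 0 T3 = D.δ 2 T0) (c22 : D.δ 2 T3 = D.δ 2 T2) :
    ∃ S : D _⦋3⦌, D.δ 0 S = T0 ∧ D.δ 2 S = T2 ∧ D.δ 3 S = T3 := by
  have compat : ∀ (a b : Fin 3), a ≤ b → ∀ (ha : a.castSucc ≠ (1 : Fin 4))
      (hb : b.succ ≠ (1 : Fin 4)),
      D.δ a ((fun j (_ : j ≠ (1 : Fin 4)) => ![T0, T0, T2, T3] j) b.succ hb)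
        = D.δ b ((fun j (_ : j ≠ (1 : Fin 4)) => ![T0, T0, T2, T3] j) a.castSucc ha) := by
    intro a b hab ha hb
    fin_cases a <;> fin_cases b <;> first
      | exact absurd rfl ha
      | exact absurd rfl hb
      | exact absurd hab (by decide)
      | exact c01
      | exact c02
      | exact c22
  obtain ⟨S, hS⟩ := fillC (i := (1 : Fin 4)) (by decide) (by decide)
    (fun j _ => ![T0, T0, T2, T3] j) compat
  exact ⟨S, hS 0 (by decide), hS 2 (by decide), hS 3 (by decide)⟩

/-- Inner `Λ[3,2]` filling in a quasicategory. -/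
lemma fillC32 {D : SSet.{u}} [Quasicategory D] (T0 T1 T3 : D _⦋2⦌)
    (c00 : D.δ 0 T1 = D.δ 0 T0) (c02 : D.δ 0 T3 = D.δ 2 T0) (c12 : D.δ 1 T3 = D.δ 2 T1) :
    ∃ S : D _⦋3⦌, D.δ 0 S = T0 ∧ D.δ 1 S = T1 ∧ D.δ 3 S = T3 := by
  have compat : ∀ (a b : Fin 3), a ≤ b → ∀ (ha : a.castSucc ≠ (2 : Fin 4))
      (hb : b.succ ≠ (2 : Fin 4)),
      D.δ a ((fun j (_ : j ≠ (2 : Fin 4)) => ![T0, T1, T1, T3] j) b.succ hb)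
        = D.δ b ((fun j (_ : j ≠ (2 : Fin 4)) => ![T0, T1, T1, T3] j) a.castSucc ha) := by
    intro a b hab ha hb
    fin_cases a <;> fin_cases b <;> first
      | exact absurd rfl ha
      | exact absurd rfl hb
      | exact absurd hab (by decide)
      | exact c00
      | exact c02
      | exact c12
  obtain ⟨S, hS⟩ := fillC (i := (2 : Fin 4)) (by decide) (by decide)
    (fun j _ => ![T0, T1, T1, T3] j) compat
  exact ⟨S, hS 0 (by decide), hS 1 (by decide), hS 3 (by decide)⟩


section Identities
variable {X : SSet.{u}}

-- first simplicial identity, elementwise, low dimensions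
lemma d0d1 (z : X _⦋2⦌) : X.δ 0 (X.δ 1 z) = X.δ 0 (X.δ 0 z) :=
  ConcreteCategory.congr_hom (X.δ_comp_δ (i := 0) (j := 0) (le_refl _)) z
lemma d0d2 (z : X _⦋2⦌) : X.δ 0 (X.δ 2 z) = X.δ 1 (X.δ 0 z) :=
  ConcreteCategory.congr_hom (X.δ_comp_δ (i := 0) (j := 1) (by decide)) z
lemma d1d2 (z : X _⦋2⦌) : X.δ 1 (X.δ 2 z) = X.δ 1 (X.δ 1 z) :=
  ConcreteCategory.congr_hom (X.δ_comp_δ (i := 1) (j := 1) (le_refl _)) z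
lemma D0D1 (z : X _⦋3⦌) : X.δ 0 (X.δ 1 z) = X.δ 0 (X.δ 0 z) :=
  ConcreteCategory.congr_hom (X.δ_comp_δ (i := 0) (j := 0) (le_refl _)) z
lemma D0D2 (z : X _⦋3⦌) : X.δ 0 (X.δ 2 z) = X.δ 1 (X.δ 0 z) :=
  ConcreteCategory.congr_hom (X.δ_comp_δ (i := 0) (j := 1) (by decide)) z
lemma D0D3 (z : X _⦋3⦌) : X.δ 0 (X.δ 3 z) = X.δ 2 (X.δ 0 z) :=
  ConcreteCategory.congr_hom (X.δ_comp_δ (i := 0) (j := 2) (by decide)) z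
lemma D1D2 (z : X _⦋3⦌) : X.δ 1 (X.δ 2 z) = X.δ 1 (X.δ 1 z) :=
  ConcreteCategory.congr_hom (X.δ_comp_δ (i := 1) (j := 1) (le_refl _)) z
lemma D1D3 (z : X _⦋3⦌) : X.δ 1 (X.δ 3 z) = X.δ 2 (X.δ 1 z) :=
  ConcreteCategory.congr_hom (X.δ_comp_δ (i := 1) (j := 2) (by decide)) z
lemma D2D3 (z : X _⦋3⦌) : X.δ 2 (X.δ 3 z) = X.δ 2 (X.δ 2 z) :=
  ConcreteCategory.congr_hom (X.δ_comp_δ (i := 2) (j := 2) (le_refl _)) z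

-- δσ identities, elementwise
lemma d0s0 (e : X _⦋0⦌) : X.δ 0 (X.σ 0 e) = e := by
  simpa using ConcreteCategory.congr_hom (X.δ_comp_σ_self (i := (0 : Fin 1))) e
lemma d1s0 (e : X _⦋0⦌) : X.δ 1 (X.σ 0 e) = e := by
  simpa using ConcreteCategory.congr_hom (X.δ_comp_σ_succ (i := (0 : Fin 1))) e
lemma e0s0 (e : X _⦋1⦌) : X.δ 0 (X.σ 0 e) = e := by
  simpa using ConcreteCategory.congr_hom (X.δ_comp_σ_self (i := (0 : Fin 2))) e
lemma e1s0 (e : X _⦋1⦌) : X.δ 1 (X.σ 0 e) = e := by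
  simpa using ConcreteCategory.congr_hom (X.δ_comp_σ_succ (i := (0 : Fin 2))) e
lemma e2s0 (e : X _⦋1⦌) : X.δ 2 (X.σ 0 e) = X.σ 0 (X.δ 1 e) :=
  ConcreteCategory.congr_hom (X.δ_comp_σ_of_gt (i := 1) (j := 0) (by decide)) e
lemma e0s1 (e : X _⦋1⦌) : X.δ 0 (X.σ 1 e) = X.σ 0 (X.δ 0 e) :=
  ConcreteCategory.congr_hom (X.δ_comp_σ_of_le (i := 0) (j := 0) (by decide)) e
lemma e1s1 (e : X _⦋1⦌) : X.δ 1 (X.σ 1 e) = e := by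
  simpa using ConcreteCategory.congr_hom (X.δ_comp_σ_self (i := (1 : Fin 2))) e
lemma e2s1 (e : X _⦋1⦌) : X.δ 2 (X.σ 1 e) = e := by
  simpa using ConcreteCategory.congr_hom (X.δ_comp_σ_succ (i := (1 : Fin 2))) e
lemma t1s1 (s : X _⦋2⦌) : X.δ 1 (X.σ 1 s) = s := by
  simpa using ConcreteCategory.congr_hom (X.δ_comp_σ_self (i := (1 : Fin 3))) s
lemma t2s1 (s : X _⦋2⦌) : X.δ 2 (X.σ 1 s) = s := by
  simpa using ConcreteCategory.congr_hom (X.δ_comp_σ_succ (i := (1 : Fin 3))) s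
lemma t3s1 (s : X _⦋2⦌) : X.δ 3 (X.σ 1 s) = X.σ 1 (X.δ 2 s) :=
  ConcreteCategory.congr_hom (X.δ_comp_σ_of_gt (i := 2) (j := 1) (by decide)) s
lemma t0s1 (s : X _⦋2⦌) : X.δ 0 (X.σ 1 s) = X.σ 0 (X.δ 0 s) :=
  ConcreteCategory.congr_hom (X.δ_comp_σ_of_le (i := 0) (j := 0) (by decide)) s

end Identities

end Fill

end SSetAux

end Auxiliary

open SSetAux

/-- Every cocartesian fibration over a quasicategory is an isofibration: equivalences
in the base with a given lift of the source lift to equivalences in the total space. -/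
theorem isofibration_of_isCocartesianFibration {X C : SSet.{u}} [Quasicategory C]
    (p : X ⟶ C) (hp : IsCocartesianFibration p)
    (x : X _⦋0⦌) (f : C _⦋1⦌) (hf : IsEquivEdge C f) (hsrc : C.δ 1 f = p.app (op ⦋0⦌) x) :
    ∃ φ : X _⦋1⦌, IsEquivEdge X φ ∧ X.δ 1 φ = x ∧ p.app (op ⦋1⦌) φ = f := by
  obtain ⟨g, hg1, hg0, ⟨σC, hσC0, hσC2, hσC1⟩, ⟨τC, hτC0, hτC2, hτC1⟩⟩ := hf
  -- step 1 : cocartesian lift φ of f starting at x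
  obtain ⟨φ, hφ1, hφp, hφcoc⟩ := hp.2 f x hsrc.symm
  set y := X.δ 0 φ with hy
  have hpx : p.app (op ⦋0⦌) x = C.δ 1 f := hsrc.symm
  have hpy : p.app (op ⦋0⦌) y = C.δ 0 f := by rw [hy, napp_δ, hφp]
  -- the 3-simplex SS3 in C with faces (τC, σ₀ f, ρ, σC)
  obtain ⟨SS3, hSS0, hSS1, hSS3⟩ := fillC32 τC (C.σ 0 f) σC
    (by rw [e0s0, hτC0]) (by rw [hσC0, hτC2]) (by rw [hσC1, e2s0])
  set ρ := C.δ 2 SS3 with hρ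
  have hρ0 : C.δ 0 ρ = C.σ 0 (C.δ 0 f) := by rw [hρ, D0D2, hSS0, hτC1]
  have hρ1 : C.δ 1 ρ = f := by rw [hρ, D1D2, hSS1, e1s0]
  have hρ2 : C.δ 2 ρ = f := by rw [hρ, ← D2D3, hSS3, hσC2]
  -- step 2 : t = (ψ, σ₀x, φ) over σC ; ψ is a left homotopy inverse of φ
  obtain ⟨t, ht1, ht2, htp⟩ := fill20 hφcoc (X.σ 0 x) (by rw [hφ1, d1s0]) σC
    (by rw [napp_σ, hpx, hσC1]) (by rw [hφp, hσC2])
  set ψ := X.δ 0 t with hψ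
  have hψp : p.app (op ⦋1⦌) ψ = g := by rw [hψ, napp_δ, htp, hσC0]
  have hψ1 : X.δ 1 ψ = y := by rw [hψ, ← d0d2, ht2]
  have hψ0 : X.δ 0 ψ = x := by rw [hψ, ← d0d1, ht1, d0s0]
  -- step 3 : u = (θ, φ, φ) over ρ
  obtain ⟨u, hu1, hu2, hup⟩ := fill20 hφcoc φ rfl ρ
    (by rw [hφp, hρ1]) (by rw [hφp, hρ2])
  set θ := X.δ 0 u with hθ
  have hθ1 : X.δ 1 θ = y := by rw [hθ, ← d0d2, hu2]
  have hθ0 : X.δ 0 θ = y := by rw [hθ, ← d0d1, hu1]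
  -- step 4 : V = (φ, θ, ψ) via cocartesian Λ[3,0] fill over SS3
  obtain ⟨w, hw1, hw2, hw3, hwp⟩ := fill30 hφcoc (X.σ 0 φ) u t
    (by rw [hu1, e1s0]) (by rw [ht1, e2s0, hφ1]) (by rw [ht2, hu2])
    hu2 SS3 (by rw [napp_σ, hφp, hSS1]) (by rw [hup]) (by rw [htp, hSS3])
  set V := X.δ 0 w with hV
  have hV0 : X.δ 0 V = φ := by rw [hV, ← D0D1, hw1, e0s0]
  have hV1 : X.δ 1 V = θ := by rw [hV, ← D0D2, hw2]
  have hV2 : X.δ 2 V = ψ := by rw [hV, ← D0D3, hw3]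
  -- step 5 : u' = (θ', φ, φ) over σ₁ f
  obtain ⟨u', hu'1, hu'2, hu'p⟩ := fill20 hφcoc φ rfl (C.σ 1 f)
    (by rw [hφp, e1s1]) (by rw [hφp, e2s1])
  set θ' := X.δ 0 u' with hθ'
  have hθ'0 : X.δ 0 θ' = y := by rw [hθ', ← d0d1, hu'1]
  -- step 6 : v = (σ₀ y, *, φ) over σ₁ f
  obtain ⟨v, hv0, hv2, hvp⟩ := fill21 hp.1 (X.σ 0 y) φ (by rw [d1s0]) (C.σ 1 f)
    (by rw [napp_σ, hpy, e0s1]) (by rw [hφp, e2s1])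
  -- step 7 : W = (σ₀y, σ₀y, θ') via cocartesian Λ[3,0] fill over σ₁ σ₁ f
  obtain ⟨w', hw'1, hw'2, hw'3, -⟩ := fill30 hφcoc v v u'
    rfl (by rw [hu'1, hv2]) (by rw [hu'2, hv2]) hv2 (C.σ 1 (C.σ 1 f))
    (by rw [hvp, t1s1]) (by rw [hvp, t2s1]) (by rw [hu'p, t3s1, e2s1])
  set W := X.δ 0 w' with hW
  have hW1 : X.δ 1 W = X.σ 0 y := by rw [hW, ← D0D2, hw'2, hv0]
  have hW2 : X.δ 2 W = θ' := by rw [hW, ← D0D3, hw'3]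
  have hW0 : X.δ 0 W = X.σ 0 y := by rw [hW, ← D0D1, hw'1, hv0]
  -- step 8 : S5 in C with faces (σ₀σ₀b, ρ₂, σ₁f, ρ)
  obtain ⟨S5, hS50, hS52, hS53⟩ := fillC31 (C.σ 0 (C.σ 0 (C.δ 0 f))) (C.σ 1 f) ρ
    (by rw [e0s1, e1s0]) (by rw [hρ0, e2s0, d1s0]) (by rw [hρ2, e2s1])
  set ρ₂ := C.δ 1 S5 with hρ₂
  have hρ₂1 : C.δ 1 ρ₂ = f := by rw [hρ₂, ← D1D2, hS52, e1s1]
  have hρ₂2 : C.δ 2 ρ₂ = f := by rw [hρ₂, ← D1D3, hS53, hρ1]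
  -- step 9 : u₂ = (θ₂, φ, φ) over ρ₂
  obtain ⟨u₂, hu₂1, hu₂2, hu₂p⟩ := fill20 hφcoc φ rfl ρ₂
    (by rw [hφp, hρ₂1]) (by rw [hφp, hρ₂2])
  set θ₂ := X.δ 0 u₂ with hθ₂
  have hθ₂0 : X.δ 0 θ₂ = y := by rw [hθ₂, ← d0d1, hu₂1]
  -- step 10 : M₁ = (θ₂, θ', θ) via cocartesian Λ[3,0] fill over S5
  obtain ⟨w₂, hw₂1, hw₂2, hw₂3, -⟩ := fill30 hφcoc u₂ u' u
    (by rw [hu'1, hu₂1]) (by rw [hu1, hu₂2]) (by rw [hu2, hu'2]) hu'2 S5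
    (by rw [hu₂p]) (by rw [hu'p, hS52]) (by rw [hup, hS53])
  set M₁ := X.δ 0 w₂ with hM₁
  have hM₁0 : X.δ 0 M₁ = θ₂ := by rw [hM₁, ← D0D1, hw₂1]
  have hM₁1 : X.δ 1 M₁ = θ' := by rw [hM₁, ← D0D2, hw₂2]
  have hM₁2 : X.δ 2 M₁ = θ := by rw [hM₁, ← D0D3, hw₂3]
  -- step 11 : M₁' = (θ₂, σ₀y, θ) via inner Λ[3,2] fill
  obtain ⟨m, hm0, hm1, hm3⟩ := fill32 hp.1 (X.σ 1 θ₂) W M₁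
    (by rw [hW0, e0s1, hθ₂0]) (by rw [hM₁0, e2s1]) (by rw [hM₁1, hW2])
  set M₁' := X.δ 2 m with hM₁'
  have hM₁'0 : X.δ 0 M₁' = θ₂ := by rw [hM₁', D0D2, hm0, e1s1]
  have hM₁'1 : X.δ 1 M₁' = X.σ 0 y := by rw [hM₁', D1D2, hm1, hW1]
  have hM₁'2 : X.δ 2 M₁' = θ := by rw [hM₁', ← D2D3, hm3, hM₁2]
  -- step 12 : K = (θ, θ, θ) via inner Λ[3,1] fill
  obtain ⟨k, hk0, hk2, hk3⟩ := fill31 hp.1 u V V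
    (by rw [hV0, hu1]) (by rw [hV0, hu2]) rfl
  set K := X.δ 1 k with hK
  have hK0 : X.δ 0 K = θ := by rw [hK, D0D1, hk0]
  have hK1 : X.δ 1 K = θ := by rw [hK, ← D1D2, hk2, hV1]
  have hK2 : X.δ 2 K = θ := by rw [hK, ← D1D3, hk3, hV1]
  -- step 13 : L = (θ₂, θ, θ) via inner Λ[3,1] fill
  obtain ⟨l, hl0, hl2, hl3⟩ := fill31 hp.1 M₁' (X.σ 1 θ) K
    (by rw [e0s1, hθ0, hM₁'1]) (by rw [hK0, hM₁'2]) (by rw [hK2, e2s1])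
  set L := X.δ 1 l with hL
  have hL0 : X.δ 0 L = θ₂ := by rw [hL, D0D1, hl0, hM₁'0]
  have hL1 : X.δ 1 L = θ := by rw [hL, ← D1D2, hl2, e1s1]
  have hL2 : X.δ 2 L = θ := by rw [hL, ← D1D3, hl3, hK1]
  -- step 14 : E = (σ₀y, σ₀y, θ) via inner Λ[3,1] fill
  obtain ⟨e3, he0, he2, he3⟩ := fill31 hp.1 (X.σ 1 θ₂) M₁' L
    (by rw [hM₁'0, e1s1]) (by rw [hL0, e2s1]) (by rw [hL2, hM₁'2])
  set E := X.δ 1 e3 with hE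
  have hE0 : X.δ 0 E = X.σ 0 y := by rw [hE, D0D1, he0, e0s1, hθ₂0]
  have hE1 : X.δ 1 E = X.σ 0 y := by rw [hE, ← D1D2, he2, hM₁'1]
  have hE2 : X.δ 2 E = θ := by rw [hE, ← D1D3, he3, hL1]
  -- step 15 : τ* = (φ, σ₀y, ψ) via inner Λ[3,2] fill
  obtain ⟨r, hr0, hr1, hr3⟩ := fill32 hp.1 (X.σ 1 φ) E V
    (by rw [hE0, e0s1]) (by rw [hV0, e2s1]) (by rw [hV1, hE2])
  refine ⟨φ, ⟨ψ, by rw [hψ1], by rw [hψ0, hφ1], ⟨t, rfl, ht2, by rw [ht1, hφ1]⟩,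
    ⟨X.δ 2 r, ?_, ?_, ?_⟩⟩, hφ1, hφp⟩
  · rw [D0D2, hr0, e1s1]
  · rw [← D2D3, hr3, hV2]
  · rw [D1D2, hr1, hE1]
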